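/- For a Markov random field on ℤ^d with strictly positive finite-dimensional distributions and basic neighborhood Γ_0, if a neighborhood Γ satisfies Q(a(i) | a(Γ^i)) = Q_{Γ_0}(a(i) | a(Γ_0^i)) for all sites i and all configurations, then Γ is itself a Markov neighborhood, i.e., for any finite Δ ⊇ Γ with i ∉ Δ, Q(a(i) | a(Δ^i)) = Q(a(i) | a(Γ^i)). -/
import Mathlib


open MeasureTheory

/-- The probability of the cylinder set determined by the configuration `a` on the finite
region `Δ`. -/
noncomputable def cylProb {d : ℕ} {A : Type*} [MeasurableSpace A]
    (μ : Measure ((Fin d → ℤ) → A)) (Δ : Finset (Fin d → ℤ)) (a : (Fin d → ℤ) → A) : ℝ :=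
  (μ {x | ∀ i ∈ Δ, x i = a i}).toReal

/-- The conditional probability Q(a(Δ) | a(Φ)). -/
noncomputable def condProb {d : ℕ} {A : Type*} [MeasurableSpace A]
    (μ : Measure ((Fin d → ℤ) → A)) (Δ Φ : Finset (Fin d → ℤ)) (a : (Fin d → ℤ) → A) : ℝ :=
  cylProb μ (Δ ∪ Φ) a / cylProb μ Φ a

open scoped Classical

section Atoms

variable {A : Type*} [Fintype A] [MeasurableSpace A]

/-- The measurable atom containing `a`. -/
def atomOf (a : A) : Set A := ⋂₀ {B : Set A | MeasurableSet B ∧ a ∈ B}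

lemma mem_atomOf_self (a : A) : a ∈ atomOf a := fun _ hB => hB.2

lemma atomOf_subset {a : A} {B : Set A} (hB : MeasurableSet B) (ha : a ∈ B) :
    atomOf a ⊆ B :=
  Set.sInter_subset_of_mem ⟨hB, ha⟩

lemma measurableSet_atomOf (a : A) : MeasurableSet (atomOf a) := by
  have hcount : {B : Set A | MeasurableSet B ∧ a ∈ B}.Countable := Set.to_countable _
  exact MeasurableSet.sInter hcount fun B hB => hB.1

lemma mem_atomOf_symm {a x : A} (h : x ∈ atomOf a) : a ∈ atomOf x := by
  intro B hB
  by_contra hnot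
  have : x ∈ Bᶜ := atomOf_subset hB.1.compl hnot h
  exact this hB.2

lemma atomOf_eq_of_mem {a x : A} (h : x ∈ atomOf a) : atomOf x = atomOf a := by
  apply subset_antisymm
  · exact atomOf_subset (measurableSet_atomOf a) h
  · exact atomOf_subset (measurableSet_atomOf x) (mem_atomOf_symm h)

end Atoms

section Pi

variable {d : ℕ} {A : Type*} [Fintype A] [MeasurableSpace A]

/-- Membership in a measurable subset of the configuration space only depends on the
coordinatewise atoms. -/
lemma measurable_invariant {E : Set ((Fin d → ℤ) → A)} (hE : MeasurableSet E)
    {x y : (Fin d → ℤ) → A} (h : ∀ j, y j ∈ atomOf (x j)) (hx : x ∈ E) : y ∈ E := by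
  let m' : MeasurableSpace ((Fin d → ℤ) → A) :=
    { MeasurableSet' := fun E =>
        ∀ x y : (Fin d → ℤ) → A, (∀ j, y j ∈ atomOf (x j)) → (x ∈ E ↔ y ∈ E)
      measurableSet_empty := fun _ _ _ => Iff.rfl
      measurableSet_compl := fun E hE x y h => not_congr (hE x y h)
      measurableSet_iUnion := fun f hf x y h => by
        simp only [Set.mem_iUnion]
        exact exists_congr fun n => hf n x y h }
  have hle : (MeasurableSpace.pi : MeasurableSpace ((Fin d → ℤ) → A)) ≤ m' := by
    show (⨆ j : Fin d → ℤ, MeasurableSpace.comap (fun b : (Fin d → ℤ) → A => b j) inferInstance) ≤ m'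
    refine iSup_le fun j => ?_
    rintro t ⟨s, hs, rfl⟩
    intro x y h
    constructor
    · intro hx
      exact atomOf_subset hs hx (h j)
    · intro hy
      exact atomOf_subset hs hy (mem_atomOf_symm (h j))
  exact (hle E hE x y h).mp hx

/-- The "blocked" cylinder: configurations whose coordinates on `Δ` lie in the atoms
of `a`'s coordinates. -/
def blockCyl (Δ : Finset (Fin d → ℤ)) (a : (Fin d → ℤ) → A) : Set ((Fin d → ℤ) → A) :=
  {x | ∀ j ∈ Δ, x j ∈ atomOf (a j)}

lemma measurableSet_blockCyl (Δ : Finset (Fin d → ℤ)) (a : (Fin d → ℤ) → A) :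
    MeasurableSet (blockCyl Δ a) := by
  have : blockCyl Δ a = ⋂ j ∈ Δ, (fun x : (Fin d → ℤ) → A => x j) ⁻¹' atomOf (a j) := by
    ext x; simp [blockCyl]
  rw [this]
  exact MeasurableSet.biInter Δ.countable_toSet
    fun j _ => measurable_pi_apply j (measurableSet_atomOf (a j))

lemma cyl_measure_eq_blockCyl (μ : Measure ((Fin d → ℤ) → A))
    (Δ : Finset (Fin d → ℤ)) (a : (Fin d → ℤ) → A) :
    μ {x | ∀ j ∈ Δ, x j = a j} = μ (blockCyl Δ a) := by
  apply le_antisymm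
  · refine measure_mono fun x hx j hj => ?_
    rw [hx j hj]; exact mem_atomOf_self _
  · have hsub : blockCyl Δ a ⊆ toMeasurable μ {x | ∀ j ∈ Δ, x j = a j} := by
      intro x hx
      set y : (Fin d → ℤ) → A := fun j => if j ∈ Δ then a j else x j with hy
      have hycyl : y ∈ {x | ∀ j ∈ Δ, x j = a j} := fun j hj => by simp [hy, hj]
      have hymem : y ∈ toMeasurable μ {x | ∀ j ∈ Δ, x j = a j} :=
        subset_toMeasurable μ _ hycyl
      refine measurable_invariant (measurableSet_toMeasurable μ _) (x := y) ?_ hymem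
      intro j
      by_cases hj : j ∈ Δ
      · simpa [hy, hj] using hx j hj
      · simp [hy, hj, mem_atomOf_self]
    calc μ (blockCyl Δ a) ≤ μ (toMeasurable μ {x | ∀ j ∈ Δ, x j = a j}) := measure_mono hsub
      _ = μ {x | ∀ j ∈ Δ, x j = a j} := measure_toMeasurable _

lemma cylProb_eq_blockCyl (μ : Measure ((Fin d → ℤ) → A))
    (Δ : Finset (Fin d → ℤ)) (a : (Fin d → ℤ) → A) :
    cylProb μ Δ a = (μ (blockCyl Δ a)).toReal := by
  unfold cylProb
  rw [cyl_measure_eq_blockCyl]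

lemma cylProb_congr (μ : Measure ((Fin d → ℤ) → A))
    {Δ : Finset (Fin d → ℤ)} {a a' : (Fin d → ℤ) → A}
    (h : ∀ j ∈ Δ, a' j = a j) : cylProb μ Δ a' = cylProb μ Δ a := by
  unfold cylProb
  congr 2
  ext x
  exact forall₂_congr fun j hj => by rw [h j hj]

/-- The finite set of atoms of `A`. -/
noncomputable def atomsF (A : Type*) [Fintype A] [MeasurableSpace A] : Finset (Set A) :=
  Finset.univ.image atomOf

lemma blockCyl_inter_atom (Δ : Finset (Fin d → ℤ)) (a : (Fin d → ℤ) → A)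
    {k : Fin d → ℤ} (hk : k ∉ Δ) (c : A) :
    blockCyl Δ a ∩ (fun x : (Fin d → ℤ) → A => x k) ⁻¹' atomOf c
      = blockCyl (insert k Δ) (Function.update a k c) := by
  ext x
  simp only [blockCyl, Set.mem_inter_iff, Set.mem_setOf_eq, Set.mem_preimage,
    Finset.mem_insert]
  constructor
  · rintro ⟨h1, h2⟩ j hj
    rcases hj with rfl | hj
    · simpa [Function.update_self] using h2
    · have hne : j ≠ k := fun h => hk (h ▸ hj)
      simpa [Function.update_of_ne hne] using h1 j hj
  · intro h
    refine ⟨fun j hj => ?_, ?_⟩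
    · have hne : j ≠ k := fun h' => hk (h' ▸ hj)
      simpa [Function.update_of_ne hne] using h j (Or.inr hj)
    · simpa [Function.update_self] using h k (Or.inl rfl)

lemma cylProb_split (μ : Measure ((Fin d → ℤ) → A)) [IsProbabilityMeasure μ]
    (Δ : Finset (Fin d → ℤ)) (a : (Fin d → ℤ) → A) (k : Fin d → ℤ) (hk : k ∉ Δ) :
    cylProb μ Δ a
      = ∑ B ∈ atomsF A, (μ (blockCyl Δ a ∩ (fun x : (Fin d → ℤ) → A => x k) ⁻¹' B)).toReal := by
  rw [cylProb_eq_blockCyl]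
  have hcover : blockCyl Δ a = ⋃ B ∈ atomsF A,
      blockCyl Δ a ∩ (fun x : (Fin d → ℤ) → A => x k) ⁻¹' B := by
    ext x
    simp only [Set.mem_iUnion, Set.mem_inter_iff, Set.mem_preimage, exists_prop]
    constructor
    · intro hx
      exact ⟨atomOf (x k), Finset.mem_image_of_mem _ (Finset.mem_univ _),
        hx, mem_atomOf_self _⟩
    · rintro ⟨B, _, hx, _⟩
      exact hx
  have hdisj : (atomsF A : Set (Set A)).Pairwise
      (Function.onFun Disjoint fun B =>
        blockCyl Δ a ∩ (fun x : (Fin d → ℤ) → A => x k) ⁻¹' B) := by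
    intro B hB B' hB' hne
    refine Set.disjoint_left.mpr fun x hx hx' => hne ?_
    simp only [atomsF, Finset.coe_image, Set.mem_image] at hB hB'
    obtain ⟨c, -, rfl⟩ := hB
    obtain ⟨c', -, rfl⟩ := hB'
    rw [← atomOf_eq_of_mem hx.2, ← atomOf_eq_of_mem hx'.2]
  have hmeas : ∀ B ∈ atomsF A,
      MeasurableSet (blockCyl Δ a ∩ (fun x : (Fin d → ℤ) → A => x k) ⁻¹' B) := by
    intro B hB
    simp only [atomsF, Finset.mem_image] at hB
    obtain ⟨c, -, rfl⟩ := hB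
    exact (measurableSet_blockCyl Δ a).inter (measurable_pi_apply k (measurableSet_atomOf c))
  conv_lhs => rw [hcover]
  rw [measure_biUnion_finset hdisj hmeas]
  rw [ENNReal.toReal_sum]
  intro B _
  exact measure_ne_top μ _

end Pi

section Main

variable {d : ℕ} {A : Type*} [Fintype A] [MeasurableSpace A]

lemma key_lemma (μ : Measure ((Fin d → ℤ) → A)) [IsProbabilityMeasure μ]
    (hpos : ∀ Δ a, 0 < cylProb μ Δ a)
    (G G0 : Finset (Fin d → ℤ)) (i : Fin d → ℤ) (hiG0 : i ∉ G0)
    (s : ℝ) (a : (Fin d → ℤ) → A)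
    (hbase : ∀ (Δ' : Finset (Fin d → ℤ)) (a' : (Fin d → ℤ) → A),
      G0 ⊆ Δ' → i ∉ Δ' → (∀ j ∈ insert i G, a' j = a j) →
      condProb μ {i} Δ' a' = s) :
    ∀ (n : ℕ) (Δ' : Finset (Fin d → ℤ)) (a' : (Fin d → ℤ) → A),
      G ⊆ Δ' → i ∉ Δ' → (G0 \ Δ').card ≤ n → (∀ j ∈ insert i G, a' j = a j) →
      cylProb μ ({i} ∪ Δ') a' = s * cylProb μ Δ' a' := by
  have prod_of_base : ∀ (Δ' : Finset (Fin d → ℤ)) (a' : (Fin d → ℤ) → A),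
      G0 ⊆ Δ' → i ∉ Δ' → (∀ j ∈ insert i G, a' j = a j) →
      cylProb μ ({i} ∪ Δ') a' = s * cylProb μ Δ' a' := by
    intro Δ' a' h1 h2 h3
    have h := hbase Δ' a' h1 h2 h3
    unfold condProb at h
    rwa [div_eq_iff (hpos Δ' a').ne'] at h
  intro n
  induction n with
  | zero =>
    intro Δ' a' hGΔ hiΔ hcard hagree
    have hG0 : G0 ⊆ Δ' := by
      rw [Nat.le_zero, Finset.card_eq_zero, Finset.sdiff_eq_empty_iff_subset] at hcard
      exact hcard
    exact prod_of_base Δ' a' hG0 hiΔ hagree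
  | succ n ih =>
    intro Δ' a' hGΔ hiΔ hcard hagree
    by_cases hG0 : G0 ⊆ Δ'
    · exact prod_of_base Δ' a' hG0 hiΔ hagree
    · rw [Finset.not_subset] at hG0
      obtain ⟨k, hkG0, hkΔ⟩ := hG0
      have hk : k ∈ G0 \ Δ' := Finset.mem_sdiff.mpr ⟨hkG0, hkΔ⟩
      have hki : k ≠ i := fun h => hiG0 (h ▸ hkG0)
      have hkiΔ : k ∉ ({i} ∪ Δ' : Finset (Fin d → ℤ)) := by
        simp [hki, hkΔ]
      rw [cylProb_split μ ({i} ∪ Δ') a' k hkiΔ, cylProb_split μ Δ' a' k hkΔ,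
        Finset.mul_sum]
      refine Finset.sum_congr rfl fun B hB => ?_
      obtain ⟨c, -, rfl⟩ := Finset.mem_image.mp hB
      rw [blockCyl_inter_atom _ _ hkiΔ c, blockCyl_inter_atom _ _ hkΔ c]
      have h1 : insert k ({i} ∪ Δ' : Finset (Fin d → ℤ)) = {i} ∪ insert k Δ' :=
        (Finset.union_insert _ _ _).symm
      rw [h1, ← cylProb_eq_blockCyl, ← cylProb_eq_blockCyl]
      refine ih (insert k Δ') (Function.update a' k c) ?_ ?_ ?_ ?_
      · exact hGΔ.trans (Finset.subset_insert _ _)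
      · simp [Finset.mem_insert, hki.symm, hiΔ]
      · rw [Finset.sdiff_insert, Finset.card_erase_of_mem hk]
        omega
      · intro j hj
        have hjk : j ≠ k := by
          rintro rfl
          rcases Finset.mem_insert.mp hj with h | h
          · exact hki h
          · exact hkΔ (hGΔ h)
        rw [Function.update_of_ne hjk]
        exact hagree j hj

end Main


/-- Lemma A.2: if the single-site conditional probabilities given the Γ-neighborhood coincide
with the one-point specification of the Markov field (with basic neighborhood Γ0), then Γ is a
Markov neighborhood: conditioning on any larger finite set Δ ⊇ Γ^i with i ∉ Δ gives the same
conditional probability. -/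
theorem stmt5 {d : ℕ} {A : Type*} [Fintype A] [MeasurableSpace A]
    (μ : Measure ((Fin d → ℤ) → A)) [IsProbabilityMeasure μ]
    (hpos : ∀ Δ a, 0 < cylProb μ Δ a)
    (Γ0 Γ : Finset (Fin d → ℤ))
    (h00 : (0 : Fin d → ℤ) ∉ Γ0) (hsym0 : ∀ x ∈ Γ0, -x ∈ Γ0)
    (h0 : (0 : Fin d → ℤ) ∉ Γ) (hsym : ∀ x ∈ Γ, -x ∈ Γ)
    (spec : A → ((Fin d → ℤ) → A) → ℝ)
    (hMarkov : ∀ (i : Fin d → ℤ) (Δ : Finset (Fin d → ℤ)) (a : (Fin d → ℤ) → A),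
      Γ0.image (fun j => i + j) ⊆ Δ → i ∉ Δ →
      condProb μ {i} Δ a = spec (a i) (fun j => a (i + j)))
    (hΓ : ∀ (i : Fin d → ℤ) (a : (Fin d → ℤ) → A),
      condProb μ {i} (Γ.image (fun j => i + j)) a = spec (a i) (fun j => a (i + j)))
    (i : Fin d → ℤ) (Δ : Finset (Fin d → ℤ)) (a : (Fin d → ℤ) → A)
    (hΔ : Γ.image (fun j => i + j) ⊆ Δ) (hiΔ : i ∉ Δ) :
    condProb μ {i} Δ a = condProb μ {i} (Γ.image (fun j => i + j)) a := by
  classical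
  set G : Finset (Fin d → ℤ) := Γ.image (fun j => i + j) with hG
  set G0 : Finset (Fin d → ℤ) := Γ0.image (fun j => i + j) with hG0
  have hiG0 : i ∉ G0 := by
    intro hmem
    rw [hG0, Finset.mem_image] at hmem
    obtain ⟨j, hj, hij⟩ := hmem
    have hj0 : j = 0 := by simpa using hij
    exact h00 (hj0 ▸ hj)
  set s : ℝ := condProb μ {i} G a with hs
  have hbase : ∀ (Δ' : Finset (Fin d → ℤ)) (a' : (Fin d → ℤ) → A),
      G0 ⊆ Δ' → i ∉ Δ' → (∀ j ∈ insert i G, a' j = a j) →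
      condProb μ {i} Δ' a' = s := by
    intro Δ' a' h1 h2 h3
    rw [hMarkov i Δ' a' h1 h2, ← hΓ i a', hs]
    unfold condProb
    have e1 : cylProb μ ({i} ∪ G) a' = cylProb μ ({i} ∪ G) a := by
      refine cylProb_congr μ fun j hj => h3 j ?_
      rw [Finset.mem_insert]
      simpa [Finset.mem_union] using hj
    have e2 : cylProb μ G a' = cylProb μ G a := by
      exact cylProb_congr μ fun j hj => h3 j (Finset.mem_insert_of_mem hj)
    rw [e1, e2]
  have key := key_lemma μ hpos G G0 i hiG0 s a hbase ((G0 \ Δ).card) Δ a hΔ hiΔ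
    le_rfl (fun _ _ => rfl)
  show condProb μ {i} Δ a = s
  unfold condProb
  rw [key, mul_div_assoc, div_self (hpos Δ a).ne', mul_one]
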